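/- Let λ < 0 and set α_n = (1+λ²)^{-1/2} (2 log n)^{-1/2} and β_n = (2 log n / (1+λ²))^{1/2} - (log log n + log(-2πλ)) / ((1+λ²)^{1/2} (2 log n)^{1/2}) for n ≥ 2. Then for every real x, (F_λ(α_n x + β_n))^n → Λ(x) as n → ∞. -/

import Mathlib

open Real MeasureTheory Filter Topology

/-- Standard normal density. -/
noncomputable def stdPhi (x : ℝ) : ℝ := (Real.sqrt (2 * Real.pi))⁻¹ * Real.exp (-(x ^ 2) / 2)

/-- Standard normal cdf. -/
noncomputable def stdCdf (x : ℝ) : ℝ := ∫ t in Set.Iic x, stdPhi t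

/-- Skew normal density with shape parameter l. -/
noncomputable def snPdf (l x : ℝ) : ℝ := 2 * stdPhi x * stdCdf (l * x)

/-- Skew normal cdf with shape parameter l. -/
noncomputable def snCdf (l x : ℝ) : ℝ := ∫ t in Set.Iic x, snPdf l t

/-- Gumbel extreme value distribution function. -/
noncomputable def gumbel (x : ℝ) : ℝ := Real.exp (-Real.exp (-x))

open Set

lemma stdPhi_pos (x : ℝ) : 0 < stdPhi x := by
  unfold stdPhi
  positivity

lemma stdPhi_nonneg (x : ℝ) : 0 ≤ stdPhi x := (stdPhi_pos x).le

lemma stdPhi_neg (x : ℝ) : stdPhi (-x) = stdPhi x := by simp [stdPhi]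

lemma continuous_stdPhi : Continuous stdPhi := by
  unfold stdPhi; fun_prop

lemma integrable_stdPhi : Integrable stdPhi := by
  have h := integrable_exp_neg_mul_sq (b := (1:ℝ)/2) (by norm_num)
  have : stdPhi = fun x => (Real.sqrt (2 * Real.pi))⁻¹ * Real.exp (-(1/2) * x ^ 2) := by
    funext x; unfold stdPhi; ring_nf
  rw [this]
  exact h.const_mul _

lemma integral_stdPhi : ∫ x, stdPhi x = 1 := by
  have h := integral_gaussian ((1:ℝ)/2)
  have h2 : ∫ x, stdPhi x = (Real.sqrt (2 * Real.pi))⁻¹ * ∫ x : ℝ, Real.exp (-(1/2) * x ^ 2) := by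
    rw [← integral_const_mul]
    congr 1; funext x; unfold stdPhi; ring_nf
  rw [h2, h]
  rw [show Real.pi / (1/2) = 2 * Real.pi by ring]
  rw [inv_mul_cancel₀]
  positivity

lemma stdCdf_nonneg (x : ℝ) : 0 ≤ stdCdf x :=
  setIntegral_nonneg measurableSet_Iic (fun t _ => stdPhi_nonneg t)

lemma stdCdf_mono : Monotone stdCdf := fun x y hxy =>
  setIntegral_mono_set integrable_stdPhi.integrableOn
    (Eventually.of_forall fun t => stdPhi_nonneg t) (HasSubset.Subset.eventuallyLE (Iic_subset_Iic.2 hxy))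

lemma measurable_stdCdf : Measurable stdCdf := stdCdf_mono.measurable

lemma stdCdf_le_one (x : ℝ) : stdCdf x ≤ 1 := by
  rw [← integral_stdPhi]
  exact setIntegral_le_integral integrable_stdPhi (Eventually.of_forall fun t => stdPhi_nonneg t)

lemma stdCdf_neg_eq_tail (s : ℝ) : stdCdf (-s) = ∫ t in Ioi s, stdPhi t := by
  rw [stdCdf, ← integral_comp_neg_Ioi]
  congr 1; funext t; rw [stdPhi_neg]

lemma stdCdf_add_tail (s : ℝ) : stdCdf s + (∫ t in Ioi s, stdPhi t) = 1 := by
  rw [stdCdf, ← integral_stdPhi,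
    ← setIntegral_union (Iic_disjoint_Ioi le_rfl) measurableSet_Ioi
      integrable_stdPhi.integrableOn integrable_stdPhi.integrableOn,
    Iic_union_Ioi, setIntegral_univ]

lemma hasDerivAt_neg_stdPhi (t : ℝ) : HasDerivAt (fun t => -stdPhi t) (t * stdPhi t) t := by
  have h1 : HasDerivAt (fun t : ℝ => -(t ^ 2) / 2) (-t) t := by
    have := ((hasDerivAt_pow 2 t).neg.div_const 2)
    refine this.congr_deriv ?_
    norm_num; ring
  have h2 := (h1.exp).const_mul (Real.sqrt (2 * Real.pi))⁻¹
  have h3 := h2.neg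
  refine h3.congr_deriv ?_
  unfold stdPhi; ring

lemma tendsto_stdPhi_atTop : Tendsto stdPhi atTop (𝓝 0) := by
  have h0 : Tendsto (fun t : ℝ => t ^ 2) atTop atTop := by
    exact tendsto_pow_atTop (by norm_num)
  have : Tendsto (fun t : ℝ => -(t ^ 2) / 2) atTop atBot := by
    apply Tendsto.atBot_div_const (by norm_num)
    exact tendsto_neg_atBot_iff.mpr h0
  have h := Real.tendsto_exp_atBot.comp this
  have h2 := h.const_mul (Real.sqrt (2 * Real.pi))⁻¹
  rw [mul_zero] at h2
  exact h2.congr (fun t => by simp [stdPhi, Function.comp])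

lemma tendsto_neg_stdPhi_atTop : Tendsto (fun t => -stdPhi t) atTop (𝓝 0) := by
  simpa using tendsto_stdPhi_atTop.neg

lemma cont_neg_stdPhi (s : ℝ) : ContinuousWithinAt (fun t => -stdPhi t) (Ici s) s :=
  (continuous_stdPhi.neg).continuousWithinAt

lemma integral_mul_stdPhi_Ioi (s : ℝ) (hs : 0 < s) :
    ∫ t in Ioi s, t * stdPhi t = stdPhi s := by
  have := integral_Ioi_of_hasDerivAt_of_nonneg (g := fun t => -stdPhi t)
    (g' := fun t => t * stdPhi t) (a := s) (l := 0)
    (cont_neg_stdPhi s) (fun t _ => hasDerivAt_neg_stdPhi t)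
    (fun t ht => mul_nonneg (le_trans hs.le (le_of_lt ht)) (stdPhi_nonneg t))
    tendsto_neg_stdPhi_atTop
  simpa using this

lemma integrableOn_mul_stdPhi (s : ℝ) (hs : 0 < s) :
    IntegrableOn (fun t => t * stdPhi t) (Ioi s) :=
  integrableOn_Ioi_deriv_of_nonneg (cont_neg_stdPhi s) (fun t _ => hasDerivAt_neg_stdPhi t)
    (fun t ht => mul_nonneg (le_trans hs.le (le_of_lt ht)) (stdPhi_nonneg t))
    tendsto_neg_stdPhi_atTop

lemma mills_upper (s : ℝ) (hs : 0 < s) : (∫ t in Ioi s, stdPhi t) ≤ stdPhi s / s := by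
  have h1 : (∫ t in Ioi s, stdPhi t) ≤ ∫ t in Ioi s, (t * stdPhi t) / s := by
    apply setIntegral_mono_on integrable_stdPhi.integrableOn
      ((integrableOn_mul_stdPhi s hs).div_const s) measurableSet_Ioi
    intro t ht
    rw [le_div_iff₀ hs]
    have : s ≤ t := le_of_lt ht
    nlinarith [stdPhi_nonneg t]
  have h2 : (∫ t in Ioi s, (t * stdPhi t) / s) = stdPhi s / s := by
    rw [integral_div, integral_mul_stdPhi_Ioi s hs]
  linarith

noncomputable def millsAux (t : ℝ) : ℝ := -stdPhi t * (t⁻¹ - (t ^ 3)⁻¹)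

lemma hasDerivAt_millsAux (t : ℝ) (ht : t ≠ 0) :
    HasDerivAt millsAux (stdPhi t * (1 - 3 / t ^ 4)) t := by
  have h3 := (hasDerivAt_pow 3 t).inv (pow_ne_zero 3 ht)
  have hw := (hasDerivAt_inv ht).sub h3
  have h := (hasDerivAt_neg_stdPhi t).mul hw
  refine h.congr_deriv ?_
  have h4 : t ^ 4 ≠ 0 := pow_ne_zero 4 ht
  simp only [Pi.sub_apply, Pi.inv_apply]
  field_simp
  ring

lemma pow34 (t : ℝ) (ht2 : 2 ≤ t) : (3:ℝ) ≤ t ^ 4 := by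
  have h := pow_le_pow_left₀ (by norm_num : (0:ℝ) ≤ 2) ht2 4
  norm_num at h
  linarith

lemma millsDeriv_nonneg (s : ℝ) (hs : 2 ≤ s) :
    ∀ t ∈ Ioi s, (0:ℝ) ≤ stdPhi t * (1 - 3 / t ^ 4) := by
  intro t ht
  have ht2 : (2:ℝ) ≤ t := le_trans hs (le_of_lt ht)
  have h34 := pow34 t ht2
  have : (3:ℝ) / t ^ 4 ≤ 1 := by
    rw [div_le_one (by positivity)]
    linarith
  exact mul_nonneg (stdPhi_nonneg t) (by linarith)

lemma tendsto_millsAux_atTop : Tendsto millsAux atTop (𝓝 0) := by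
  have ha : Tendsto (fun t : ℝ => (t ^ 3)⁻¹) atTop (𝓝 0) :=
    tendsto_inv_atTop_zero.comp (tendsto_pow_atTop (three_ne_zero))
  have h1 := tendsto_inv_atTop_zero.sub ha
  have h2 := (tendsto_stdPhi_atTop.neg).mul h1
  simp only [sub_zero, mul_zero, neg_zero, zero_mul] at h1 h2
  exact h2.congr (fun t => by simp [millsAux, Function.comp])

lemma cont_millsAux (s : ℝ) (hs : 0 < s) : ContinuousWithinAt millsAux (Ici s) s := by
  apply ContinuousWithinAt.mul
  · exact (continuous_stdPhi.neg).continuousWithinAt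
  · have c1 : ContinuousAt (fun t : ℝ => t⁻¹) s := continuousAt_inv₀ hs.ne'
    have c2 : ContinuousAt (fun t : ℝ => (t ^ 3)⁻¹) s :=
      (continuousAt_id.pow 3).inv₀ (pow_ne_zero 3 hs.ne')
    exact (c1.sub c2).continuousWithinAt

lemma integral_millsDeriv (s : ℝ) (hs : 2 ≤ s) :
    ∫ t in Ioi s, stdPhi t * (1 - 3 / t ^ 4) = stdPhi s * (s⁻¹ - (s ^ 3)⁻¹) := by
  have hs0 : 0 < s := lt_of_lt_of_le (by norm_num) hs
  have key := integral_Ioi_of_hasDerivAt_of_nonneg (g := millsAux)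
    (g' := fun t => stdPhi t * (1 - 3 / t ^ 4)) (a := s) (l := 0)
    (cont_millsAux s hs0)
    (fun t ht => hasDerivAt_millsAux t (ne_of_gt (lt_trans hs0 ht)))
    (millsDeriv_nonneg s hs) tendsto_millsAux_atTop
  rw [key]
  unfold millsAux
  ring

lemma integrableOn_millsDeriv (s : ℝ) (hs : 2 ≤ s) :
    IntegrableOn (fun t => stdPhi t * (1 - 3 / t ^ 4)) (Ioi s) := by
  have hs0 : 0 < s := lt_of_lt_of_le (by norm_num) hs
  exact integrableOn_Ioi_deriv_of_nonneg (cont_millsAux s hs0)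
    (fun t ht => hasDerivAt_millsAux t (ne_of_gt (lt_trans hs0 ht)))
    (millsDeriv_nonneg s hs) tendsto_millsAux_atTop

lemma mills_lower (s : ℝ) (hs : 2 ≤ s) :
    stdPhi s / s * (1 - 1 / s ^ 2) ≤ ∫ t in Ioi s, stdPhi t := by
  have hs0 : 0 < s := lt_of_lt_of_le (by norm_num) hs
  have h1 : (∫ t in Ioi s, stdPhi t * (1 - 3 / t ^ 4)) ≤ ∫ t in Ioi s, stdPhi t := by
    apply setIntegral_mono_on (integrableOn_millsDeriv s hs)
      integrable_stdPhi.integrableOn measurableSet_Ioi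
    intro t ht
    have ht0 : (0:ℝ) < t := lt_trans hs0 ht
    have h3 : (0:ℝ) ≤ 3 / t ^ 4 := by positivity
    nlinarith [stdPhi_nonneg t]
  rw [integral_millsDeriv s hs] at h1
  have heq : stdPhi s / s * (1 - 1 / s ^ 2) ≤ stdPhi s * (s⁻¹ - (s ^ 3)⁻¹) := by
    have : stdPhi s / s * (1 - 1 / s ^ 2) = stdPhi s * (s⁻¹ - (s ^ 3)⁻¹) := by
      field_simp
    linarith
  linarith

lemma snPdf_nonneg (l x : ℝ) : 0 ≤ snPdf l x :=
  mul_nonneg (mul_nonneg (by norm_num) (stdPhi_nonneg x)) (stdCdf_nonneg _)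

lemma measurable_snPdf (l : ℝ) : Measurable (snPdf l) := by
  unfold snPdf
  exact ((measurable_const.mul continuous_stdPhi.measurable).mul
    (measurable_stdCdf.comp (measurable_const.mul measurable_id)))

lemma integrable_snPdf (l : ℝ) : Integrable (snPdf l) := by
  apply Integrable.mono' (integrable_stdPhi.const_mul 2) (measurable_snPdf l).aestronglyMeasurable
  filter_upwards with x
  rw [Real.norm_eq_abs, abs_of_nonneg (snPdf_nonneg l x)]
  unfold snPdf
  nlinarith [stdPhi_nonneg x, stdCdf_nonneg (l * x), stdCdf_le_one (l * x)]

lemma stdCdf_symm (s : ℝ) : stdCdf s + stdCdf (-s) = 1 := by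
  rw [stdCdf_neg_eq_tail]; exact stdCdf_add_tail s

lemma integral_snPdf (l : ℝ) : ∫ x, snPdf l x = 1 := by
  have hneg : (∫ x, snPdf l x) = ∫ x, snPdf (-l) x := by
    rw [← integral_neg_eq_self (snPdf l)]
    congr 1; funext x
    unfold snPdf
    rw [stdPhi_neg]
    ring_nf
  have hsum : (∫ x, snPdf l x) + (∫ x, snPdf (-l) x) = 2 := by
    rw [← integral_add (integrable_snPdf l) (integrable_snPdf (-l))]
    have : ∀ x, snPdf l x + snPdf (-l) x = 2 * stdPhi x := by
      intro x
      unfold snPdf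
      have := stdCdf_symm (l * x)
      have hx : -l * x = -(l * x) := by ring
      rw [hx]
      nlinarith [stdPhi_nonneg x, this]
    rw [show (fun x => snPdf l x + snPdf (-l) x) = fun x => 2 * stdPhi x from funext this]
    rw [integral_const_mul, integral_stdPhi]
    norm_num
  linarith [hneg]

lemma snCdf_eq_one_sub_tail (l u : ℝ) : snCdf l u = 1 - ∫ t in Ioi u, snPdf l t := by
  have : snCdf l u + (∫ t in Ioi u, snPdf l t) = 1 := by
    rw [snCdf, ← integral_snPdf l,
      ← setIntegral_union (Iic_disjoint_Ioi le_rfl) measurableSet_Ioi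
        (integrable_snPdf l).integrableOn (integrable_snPdf l).integrableOn,
      Iic_union_Ioi, setIntegral_univ]
  linarith

-- exp decay
lemma tendsto_exp_neg_sq (a : ℝ) (ha : 0 < a) :
    Tendsto (fun t : ℝ => Real.exp (-(a * t ^ 2) / 2)) atTop (𝓝 0) := by
  apply Real.tendsto_exp_atBot.comp
  apply Tendsto.atBot_div_const (by norm_num : (0:ℝ) < 2)
  rw [tendsto_neg_atBot_iff]
  exact (tendsto_pow_atTop (by norm_num : 2 ≠ 0)).const_mul_atTop ha

lemma hasDerivAt_expquad (a t : ℝ) :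
    HasDerivAt (fun t : ℝ => Real.exp (-(a * t ^ 2) / 2)) (Real.exp (-(a * t ^ 2) / 2) * (-(a * t))) t := by
  have h1 : HasDerivAt (fun t : ℝ => -(a * t ^ 2) / 2) (-(a * t)) t := by
    have := ((hasDerivAt_pow 2 t).const_mul a).neg.div_const 2
    refine this.congr_deriv ?_
    push_cast
    ring
  exact h1.exp

/-- FTC (A): `∫_{Ioi u} t exp(-a t²/2) = exp(-a u²/2)/a`. -/
lemma ftcA (a u : ℝ) (ha : 0 < a) (hu : 0 < u) :
    ∫ t in Ioi u, t * Real.exp (-(a * t ^ 2) / 2) = Real.exp (-(a * u ^ 2) / 2) / a := by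
  have h := integral_Ioi_of_hasDerivAt_of_nonneg
    (g := fun t => -(Real.exp (-(a * t ^ 2) / 2) / a))
    (g' := fun t => t * Real.exp (-(a * t ^ 2) / 2)) (a := u) (l := 0)
    (Continuous.continuousWithinAt (by fun_prop))
    (fun t _ => by
      have := ((hasDerivAt_expquad a t).div_const a).neg
      refine this.congr_deriv ?_
      field_simp)
    (fun t ht => mul_nonneg (le_trans hu.le ht.le) (Real.exp_nonneg _))
    (by simpa using ((tendsto_exp_neg_sq a ha).div_const a).neg)
  rw [h]; ring

lemma integrableOn_ftcA (a u : ℝ) (ha : 0 < a) (hu : 0 < u) :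
    IntegrableOn (fun t => t * Real.exp (-(a * t ^ 2) / 2)) (Ioi u) := by
  apply integrableOn_Ioi_deriv_of_nonneg
    (g := fun t => -(Real.exp (-(a * t ^ 2) / 2) / a)) (l := 0)
    (Continuous.continuousWithinAt (by fun_prop))
    (fun t _ => by
      have := ((hasDerivAt_expquad a t).div_const a).neg
      refine this.congr_deriv ?_
      field_simp)
    (fun t ht => mul_nonneg (le_trans hu.le ht.le) (Real.exp_nonneg _))
    (by simpa using ((tendsto_exp_neg_sq a ha).div_const a).neg)

/-- FTC (B): `∫_{Ioi u} (1/t + 2/(a t³)) exp(-a t²/2) = exp(-a u²/2)/(a u²)`. -/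
lemma ftcB (a u : ℝ) (ha : 0 < a) (hu : 0 < u) :
    ∫ t in Ioi u, (t⁻¹ + 2 / (a * t ^ 3)) * Real.exp (-(a * t ^ 2) / 2)
      = Real.exp (-(a * u ^ 2) / 2) / (a * u ^ 2) := by
  have cont : ContinuousWithinAt (fun t => -(Real.exp (-(a * t ^ 2) / 2) / (a * t ^ 2))) (Ici u) u := by
    apply ContinuousWithinAt.neg
    apply ContinuousWithinAt.div
    · exact (Continuous.continuousWithinAt (by fun_prop))
    · exact (Continuous.continuousWithinAt (by fun_prop))
    · positivity
  have deriv : ∀ t ∈ Ioi u, HasDerivAt (fun t => -(Real.exp (-(a * t ^ 2) / 2) / (a * t ^ 2)))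
      ((t⁻¹ + 2 / (a * t ^ 3)) * Real.exp (-(a * t ^ 2) / 2)) t := by
    intro t ht
    have ht0 : (0:ℝ) < t := lt_trans hu ht
    have hden : HasDerivAt (fun t : ℝ => a * t ^ 2) (a * (2 * t)) t := by
      simpa using ((hasDerivAt_pow 2 t).const_mul a)
    have := ((hasDerivAt_expquad a t).div hden (by positivity)).neg
    refine this.congr_deriv ?_
    field_simp
    ring
  have nonneg : ∀ t ∈ Ioi u, (0:ℝ) ≤ (t⁻¹ + 2 / (a * t ^ 3)) * Real.exp (-(a * t ^ 2) / 2) := by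
    intro t ht
    have ht0 : (0:ℝ) < t := lt_trans hu ht
    positivity
  have lim : Tendsto (fun t => -(Real.exp (-(a * t ^ 2) / 2) / (a * t ^ 2))) atTop (𝓝 0) := by
    have h1 : Tendsto (fun t : ℝ => (a * t ^ 2)⁻¹) atTop (𝓝 0) := by
      apply tendsto_inv_atTop_zero.comp
      exact (tendsto_pow_atTop (by norm_num : 2 ≠ 0)).const_mul_atTop ha
    have := ((tendsto_exp_neg_sq a ha).mul h1).neg
    simp only [zero_mul, neg_zero] at this
    refine this.congr (fun t => ?_)
    show -(Real.exp (-(a * t ^ 2) / 2) * (a * t ^ 2)⁻¹) = _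
    ring
  have h := integral_Ioi_of_hasDerivAt_of_nonneg cont deriv nonneg lim
  rw [h]; ring

lemma integrableOn_ftcB (a u : ℝ) (ha : 0 < a) (hu : 0 < u) :
    IntegrableOn (fun t => (t⁻¹ + 2 / (a * t ^ 3)) * Real.exp (-(a * t ^ 2) / 2)) (Ioi u) := by
  have cont : ContinuousWithinAt (fun t => -(Real.exp (-(a * t ^ 2) / 2) / (a * t ^ 2))) (Ici u) u := by
    apply ContinuousWithinAt.neg
    apply ContinuousWithinAt.div
    · exact (Continuous.continuousWithinAt (by fun_prop))
    · exact (Continuous.continuousWithinAt (by fun_prop))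
    · positivity
  apply integrableOn_Ioi_deriv_of_nonneg cont
  · intro t ht
    have ht0 : (0:ℝ) < t := lt_trans hu ht
    have hden : HasDerivAt (fun t : ℝ => a * t ^ 2) (a * (2 * t)) t := by
      simpa using ((hasDerivAt_pow 2 t).const_mul a)
    have := ((hasDerivAt_expquad a t).div hden (by positivity)).neg
    refine this.congr_deriv ?_
    field_simp
    ring
  · intro t ht
    have ht0 : (0:ℝ) < t := lt_trans hu ht
    positivity
  · have h1 : Tendsto (fun t : ℝ => (a * t ^ 2)⁻¹) atTop (𝓝 0) := by
      apply tendsto_inv_atTop_zero.comp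
      exact (tendsto_pow_atTop (by norm_num : 2 ≠ 0)).const_mul_atTop ha
    have := ((tendsto_exp_neg_sq a ha).mul h1).neg
    simp only [zero_mul, neg_zero] at this
    refine this.congr (fun t => ?_)
    show -(Real.exp (-(a * t ^ 2) / 2) * (a * t ^ 2)⁻¹) = _
    ring

lemma prod_id (m t : ℝ) :
    2 * stdPhi t * stdPhi (m * t) = π⁻¹ * Real.exp (-((1 + m ^ 2) * t ^ 2) / 2) := by
  unfold stdPhi
  have h2π : (0:ℝ) < 2 * π := by positivity
  have hsq : Real.sqrt (2 * π) * Real.sqrt (2 * π) = 2 * π := Real.mul_self_sqrt h2π.le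
  have hcc : (Real.sqrt (2 * π))⁻¹ * (Real.sqrt (2 * π))⁻¹ = (2 * π)⁻¹ := by
    rw [← mul_inv, hsq]
  have hee : Real.exp (-(t ^ 2) / 2) * Real.exp (-((m * t) ^ 2) / 2)
      = Real.exp (-((1 + m ^ 2) * t ^ 2) / 2) := by
    rw [← Real.exp_add]; ring_nf
  calc 2 * ((Real.sqrt (2 * π))⁻¹ * Real.exp (-(t ^ 2) / 2)) *
        ((Real.sqrt (2 * π))⁻¹ * Real.exp (-((m * t) ^ 2) / 2))
      = 2 * ((Real.sqrt (2 * π))⁻¹ * (Real.sqrt (2 * π))⁻¹) *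
        (Real.exp (-(t ^ 2) / 2) * Real.exp (-((m * t) ^ 2) / 2)) := by ring
    _ = 2 * (2 * π)⁻¹ * Real.exp (-((1 + m ^ 2) * t ^ 2) / 2) := by rw [hcc, hee]
    _ = π⁻¹ * Real.exp (-((1 + m ^ 2) * t ^ 2) / 2) := by
        field_simp

lemma cdf_up (s : ℝ) (hs : 0 < s) : stdCdf (-s) ≤ stdPhi s / s := by
  rw [stdCdf_neg_eq_tail]; exact mills_upper s hs

lemma cdf_low (s : ℝ) (hs : 2 ≤ s) : stdPhi s / s * (1 - 1 / s ^ 2) ≤ stdCdf (-s) := by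
  rw [stdCdf_neg_eq_tail]; exact mills_lower s hs

lemma tail_upper (m u : ℝ) (hm : 0 < m) (hu : 0 < u) :
    (∫ t in Ioi u, snPdf (-m) t)
      ≤ Real.exp (-((1 + m ^ 2) * u ^ 2) / 2) / (π * m * (1 + m ^ 2) * u ^ 2) := by
  set a : ℝ := 1 + m ^ 2 with ha_def
  have ha : (0:ℝ) < a := by positivity
  have hπ : (0:ℝ) < π := pi_pos
  have key : ∀ t ∈ Ioi u, snPdf (-m) t ≤ (π * m * u ^ 2)⁻¹ * (t * Real.exp (-(a * t ^ 2) / 2)) := by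
    intro t ht
    have ht0 : (0:ℝ) < u := hu
    have htu : u < t := ht
    have ht' : (0:ℝ) < t := lt_trans hu htu
    have h1 : snPdf (-m) t = 2 * stdPhi t * stdCdf (-(m * t)) := by
      unfold snPdf; rw [neg_mul]
    have h2 : stdCdf (-(m * t)) ≤ stdPhi (m * t) / (m * t) := cdf_up _ (by positivity)
    have h3 : snPdf (-m) t ≤ 2 * stdPhi t * (stdPhi (m * t) / (m * t)) := by
      rw [h1]
      exact mul_le_mul_of_nonneg_left h2 (by have := stdPhi_nonneg t; linarith)
    have h4 : 2 * stdPhi t * (stdPhi (m * t) / (m * t)) =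
        (π * m)⁻¹ * Real.exp (-(a * t ^ 2) / 2) * t⁻¹ := by
      rw [show 2 * stdPhi t * (stdPhi (m * t) / (m * t)) =
        (2 * stdPhi t * stdPhi (m * t)) / (m * t) by ring]
      rw [prod_id, ← ha_def]
      field_simp
    have h5 : t⁻¹ ≤ t / u ^ 2 := by
      rw [inv_eq_one_div, div_le_div_iff₀ ht' (by positivity)]
      nlinarith
    have h6 : (π * m)⁻¹ * Real.exp (-(a * t ^ 2) / 2) * t⁻¹
        ≤ (π * m)⁻¹ * Real.exp (-(a * t ^ 2) / 2) * (t / u ^ 2) :=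
      mul_le_mul_of_nonneg_left h5 (by positivity)
    have h7 : (π * m)⁻¹ * Real.exp (-(a * t ^ 2) / 2) * (t / u ^ 2)
        = (π * m * u ^ 2)⁻¹ * (t * Real.exp (-(a * t ^ 2) / 2)) := by
      field_simp
    calc snPdf (-m) t ≤ 2 * stdPhi t * (stdPhi (m * t) / (m * t)) := h3
      _ = (π * m)⁻¹ * Real.exp (-(a * t ^ 2) / 2) * t⁻¹ := h4
      _ ≤ (π * m)⁻¹ * Real.exp (-(a * t ^ 2) / 2) * (t / u ^ 2) := h6
      _ = (π * m * u ^ 2)⁻¹ * (t * Real.exp (-(a * t ^ 2) / 2)) := h7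
  have hint : (∫ t in Ioi u, snPdf (-m) t)
      ≤ ∫ t in Ioi u, (π * m * u ^ 2)⁻¹ * (t * Real.exp (-(a * t ^ 2) / 2)) := by
    apply setIntegral_mono_on (integrable_snPdf (-m)).integrableOn
      ((integrableOn_ftcA a u ha hu).const_mul _) measurableSet_Ioi key
  rw [integral_const_mul, ftcA a u ha hu] at hint
  calc (∫ t in Ioi u, snPdf (-m) t)
      ≤ (π * m * u ^ 2)⁻¹ * (Real.exp (-(a * u ^ 2) / 2) / a) := hint
    _ = Real.exp (-(a * u ^ 2) / 2) / (π * m * a * u ^ 2) := by field_simp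

set_option maxHeartbeats 1000000 in
lemma tail_lower (m u : ℝ) (hm : 0 < m) (hu2 : 2 ≤ u) (hum : 2 / m ≤ u) :
    (1 - 1 / (m ^ 2 * u ^ 2)) / (1 + 2 / ((1 + m ^ 2) * u ^ 2))
        * (Real.exp (-((1 + m ^ 2) * u ^ 2) / 2) / (π * m * (1 + m ^ 2) * u ^ 2))
      ≤ ∫ t in Ioi u, snPdf (-m) t := by
  set a : ℝ := 1 + m ^ 2 with ha_def
  have ha : (0:ℝ) < a := by positivity
  have hπ : (0:ℝ) < π := pi_pos
  have hu : (0:ℝ) < u := lt_of_lt_of_le (by norm_num) hu2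
  have hmu : (2:ℝ) ≤ m * u := by
    rw [div_le_iff₀ hm] at hum; linarith [hum]
  have hmu1 : (1:ℝ) ≤ m ^ 2 * u ^ 2 := by nlinarith
  set K : ℝ := (π * m)⁻¹ * (1 - 1 / (m ^ 2 * u ^ 2)) * (1 + 2 / (a * u ^ 2))⁻¹ with hK_def
  have hKnn : 0 ≤ K := by
    apply mul_nonneg (mul_nonneg (by positivity) _) (by positivity)
    have : 1 / (m ^ 2 * u ^ 2) ≤ 1 := by
      rw [div_le_one (by positivity)]; exact hmu1
    linarith
  have key : ∀ t ∈ Ioi u,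
      K * ((t⁻¹ + 2 / (a * t ^ 3)) * Real.exp (-(a * t ^ 2) / 2)) ≤ snPdf (-m) t := by
    intro t ht
    have htu : u < t := ht
    have ht' : (0:ℝ) < t := lt_trans hu htu
    have hmt : (2:ℝ) ≤ m * t := le_trans hmu (by nlinarith)
    have h1 : snPdf (-m) t = 2 * stdPhi t * stdCdf (-(m * t)) := by
      unfold snPdf; rw [neg_mul]
    have h2 : stdPhi (m * t) / (m * t) * (1 - 1 / (m * t) ^ 2) ≤ stdCdf (-(m * t)) :=
      cdf_low _ hmt
    have h3 : 2 * stdPhi t * (stdPhi (m * t) / (m * t) * (1 - 1 / (m * t) ^ 2))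
        ≤ snPdf (-m) t := by
      rw [h1]
      exact mul_le_mul_of_nonneg_left h2 (by have := stdPhi_nonneg t; linarith)
    have h4 : 2 * stdPhi t * (stdPhi (m * t) / (m * t) * (1 - 1 / (m * t) ^ 2))
        = (π * m)⁻¹ * Real.exp (-(a * t ^ 2) / 2) * (t⁻¹ * (1 - 1 / (m ^ 2 * t ^ 2))) := by
      rw [show 2 * stdPhi t * (stdPhi (m * t) / (m * t) * (1 - 1 / (m * t) ^ 2))
        = (2 * stdPhi t * stdPhi (m * t)) * ((1 - 1 / (m * t) ^ 2) / (m * t)) by ring]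
      rw [prod_id, ← ha_def]
      have hmt0 : (0:ℝ) < m * t := by positivity
      field_simp
    -- inequality between the K-part and the exact factor
    have hA : (1 - 1 / (m ^ 2 * u ^ 2)) ≤ (1 - 1 / (m ^ 2 * t ^ 2)) := by
      have : 1 / (m ^ 2 * t ^ 2) ≤ 1 / (m ^ 2 * u ^ 2) := by
        apply div_le_div_of_nonneg_left (by norm_num) (by positivity)
        have hut : u ^ 2 ≤ t ^ 2 := by nlinarith
        exact mul_le_mul_of_nonneg_left hut (sq_nonneg m)
      linarith
    have hB : (1 + 2 / (a * u ^ 2))⁻¹ * (t⁻¹ + 2 / (a * t ^ 3)) ≤ t⁻¹ := by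
      have hstep : t⁻¹ + 2 / (a * t ^ 3) ≤ (1 + 2 / (a * u ^ 2)) * t⁻¹ := by
        have h2' : 2 / (a * t ^ 3) ≤ 2 / (a * u ^ 2 * t) := by
          apply div_le_div_of_nonneg_left (by norm_num) (by positivity)
          have hut : u ^ 2 ≤ t ^ 2 := by nlinarith
          nlinarith [mul_nonneg (mul_nonneg ha.le (sub_nonneg.2 hut)) ht'.le]
        have heq : (1 + 2 / (a * u ^ 2)) * t⁻¹ = t⁻¹ + 2 / (a * u ^ 2 * t) := by
          field_simp
        rw [heq]
        linarith
      have hpos : (0:ℝ) < 1 + 2 / (a * u ^ 2) := by positivity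
      have h' := mul_le_mul_of_nonneg_left hstep (inv_nonneg.2 hpos.le)
      rwa [inv_mul_cancel_left₀ hpos.ne'] at h'
    have hprod : (1 - 1 / (m ^ 2 * u ^ 2)) * ((1 + 2 / (a * u ^ 2))⁻¹ * (t⁻¹ + 2 / (a * t ^ 3)))
        ≤ (1 - 1 / (m ^ 2 * t ^ 2)) * t⁻¹ := by
      apply mul_le_mul hA hB _ _
      · positivity
      · have : 1 / (m ^ 2 * t ^ 2) ≤ 1 := by
          rw [div_le_one (by positivity)]; nlinarith
        linarith
    have h5 : K * ((t⁻¹ + 2 / (a * t ^ 3)) * Real.exp (-(a * t ^ 2) / 2))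
        ≤ (π * m)⁻¹ * Real.exp (-(a * t ^ 2) / 2) * (t⁻¹ * (1 - 1 / (m ^ 2 * t ^ 2))) := by
      rw [hK_def]
      have hE : (0:ℝ) ≤ Real.exp (-(a * t ^ 2) / 2) := (Real.exp_pos _).le
      calc (π * m)⁻¹ * (1 - 1 / (m ^ 2 * u ^ 2)) * (1 + 2 / (a * u ^ 2))⁻¹
            * ((t⁻¹ + 2 / (a * t ^ 3)) * Real.exp (-(a * t ^ 2) / 2))
          = (π * m)⁻¹ * Real.exp (-(a * t ^ 2) / 2)
            * ((1 - 1 / (m ^ 2 * u ^ 2)) * ((1 + 2 / (a * u ^ 2))⁻¹ * (t⁻¹ + 2 / (a * t ^ 3)))) := by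
            ring
        _ ≤ (π * m)⁻¹ * Real.exp (-(a * t ^ 2) / 2) * ((1 - 1 / (m ^ 2 * t ^ 2)) * t⁻¹) :=
            mul_le_mul_of_nonneg_left hprod (by positivity)
        _ = (π * m)⁻¹ * Real.exp (-(a * t ^ 2) / 2) * (t⁻¹ * (1 - 1 / (m ^ 2 * t ^ 2))) := by
            ring
    linarith [h3, h4 ▸ h5]
  have hint : (∫ t in Ioi u, K * ((t⁻¹ + 2 / (a * t ^ 3)) * Real.exp (-(a * t ^ 2) / 2)))
      ≤ ∫ t in Ioi u, snPdf (-m) t := by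
    apply setIntegral_mono_on ((integrableOn_ftcB a u ha hu).const_mul K)
      (integrable_snPdf (-m)).integrableOn measurableSet_Ioi key
  rw [integral_const_mul, ftcB a u ha hu] at hint
  have heq : K * (Real.exp (-(a * u ^ 2) / 2) / (a * u ^ 2))
      = (1 - 1 / (m ^ 2 * u ^ 2)) / (1 + 2 / (a * u ^ 2))
        * (Real.exp (-(a * u ^ 2) / 2) / (π * m * a * u ^ 2)) := by
    rw [hK_def]
    simp only [div_eq_mul_inv, mul_inv]
    ring
  linarith [heq ▸ hint]

lemma tendsto_sqrt_atTop : Tendsto Real.sqrt atTop atTop :=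
  tendsto_atTop_atTop_of_monotone (fun _ _ h => Real.sqrt_le_sqrt h)
    (fun b => ⟨b ^ 2, by rw [Real.sqrt_sq_eq_abs]; exact le_abs_self b⟩)

section asym
variable (x K : ℝ)

lemma L1 : Tendsto (fun T : ℝ => (x - Real.log T - K) / T) atTop (𝓝 0) := by
  have hlog : Tendsto (fun T : ℝ => Real.log T / T) atTop (𝓝 0) := by
    have := Real.tendsto_pow_log_div_mul_add_atTop 1 0 1 one_ne_zero
    simpa using this
  have hinv : Tendsto (fun T : ℝ => (x - K) * T⁻¹) atTop (𝓝 0) := by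
    simpa using tendsto_inv_atTop_zero.const_mul (x - K)
  have := hinv.sub hlog
  simp only [sub_zero, zero_sub, neg_zero] at this
  rw [show (0:ℝ) = 0 - 0 by ring]
  apply Tendsto.sub hinv hlog |>.congr
  intro T
  field_simp
  ring

lemma L2 : Tendsto (fun T : ℝ => (x - Real.log T - K) ^ 2 / (4 * T)) atTop (𝓝 0) := by
  have h2 : Tendsto (fun T : ℝ => Real.log T ^ 2 / (4 * T)) atTop (𝓝 0) := by
    have := Real.tendsto_pow_log_div_mul_add_atTop 4 0 2 (by norm_num)
    simpa using this
  have h1 : Tendsto (fun T : ℝ => Real.log T / (4 * T)) atTop (𝓝 0) := by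
    have := Real.tendsto_pow_log_div_mul_add_atTop 4 0 1 (by norm_num)
    simpa using this
  have h0 : Tendsto (fun T : ℝ => (4 * T)⁻¹) atTop (𝓝 0) := by
    apply tendsto_inv_atTop_zero.comp
    exact tendsto_atTop_atTop_of_monotone (fun _ _ h => by linarith)
      (fun b => ⟨|b|, by nlinarith [le_abs_self b, abs_nonneg b]⟩)
  have comb : Tendsto (fun T : ℝ =>
      (x - K) ^ 2 * (4 * T)⁻¹ - 2 * (x - K) * (Real.log T / (4 * T)) + Real.log T ^ 2 / (4 * T))
      atTop (𝓝 ((x - K) ^ 2 * 0 - 2 * (x - K) * 0 + 0)) :=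
    ((h0.const_mul _).sub (h1.const_mul _)).add h2
  simp only [mul_zero, sub_zero, add_zero, zero_add] at comb
  apply comb.congr
  intro T
  field_simp
  ring

end asym

section asym2
variable (x : ℝ)

lemma L3 (a K : ℝ) (ha : 0 < a) :
    Tendsto (fun T : ℝ => (2 * T + (x - Real.log T - K)) / (Real.sqrt a * Real.sqrt (2 * T)))
      atTop atTop := by
  have hbnd : Tendsto (fun T : ℝ => Real.sqrt T / (Real.sqrt a * Real.sqrt 2)) atTop atTop := by
    apply Tendsto.atTop_div_const (by positivity)
    exact _root_.tendsto_sqrt_atTop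
  apply tendsto_atTop_mono' atTop _ hbnd
  have h2 : ∀ᶠ T : ℝ in atTop, ‖(x - Real.log T - K) / T‖ < 1 :=
    NormedAddCommGroup.tendsto_nhds_zero.mp (L1 x K) 1 one_pos
  filter_upwards [eventually_ge_atTop (1:ℝ), h2] with T hT habs
  have hT0 : (0:ℝ) < T := by linarith
  set c := x - Real.log T - K with hc
  have hcT : -1 < c / T := by
    rw [Real.norm_eq_abs] at habs
    linarith [(abs_lt.mp habs).1]
  have hcgt : -T < c := by
    have := (lt_div_iff₀ hT0).mp hcT
    linarith
  have hden : 0 < Real.sqrt a * Real.sqrt (2 * T) := by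
    apply mul_pos (Real.sqrt_pos.2 ha) (Real.sqrt_pos.2 (by linarith))
  have heq : Real.sqrt T / (Real.sqrt a * Real.sqrt 2) = T / (Real.sqrt a * Real.sqrt (2 * T)) := by
    rw [Real.sqrt_mul (by norm_num : (0:ℝ) ≤ 2) T]
    rw [div_eq_div_iff (by positivity) (by positivity)]
    linear_combination (Real.sqrt a * Real.sqrt 2) * (Real.mul_self_sqrt hT0.le)
  rw [heq]
  exact (div_le_div_iff_of_pos_right hden).mpr (by linarith)

lemma L4 (m : ℝ) (hm : 0 < m) :
    Tendsto (fun T : ℝ =>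
      Real.exp T * (Real.exp (-((1 + m ^ 2) *
          ((2 * T + (x - Real.log T - Real.log (2 * π * m))) /
            (Real.sqrt (1 + m ^ 2) * Real.sqrt (2 * T))) ^ 2) / 2) /
        (π * m * (1 + m ^ 2) *
          ((2 * T + (x - Real.log T - Real.log (2 * π * m))) /
            (Real.sqrt (1 + m ^ 2) * Real.sqrt (2 * T))) ^ 2)))
      atTop (𝓝 (Real.exp (-x))) := by
  set a : ℝ := 1 + m ^ 2 with ha_def
  have ha : (0:ℝ) < a := by positivity
  set K : ℝ := Real.log (2 * π * m) with hK_def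
  have hπ : (0:ℝ) < π := pi_pos
  have h2πm : (0:ℝ) < 2 * π * m := by positivity
  -- the comparison function
  have hq : Tendsto (fun T : ℝ => 1 + (x - Real.log T - K) / (2 * T)) atTop (𝓝 1) := by
    have := ((L1 x K).div_const 2).const_add 1
    norm_num at this
    apply this.congr
    intro T
    congr 1
    ring
  have hexp : Tendsto (fun T : ℝ => Real.exp (-((x - Real.log T - K) ^ 2 / (4 * T))))
      atTop (𝓝 1) := by
    have hL2 := (L2 x K).neg
    rw [neg_zero] at hL2
    have := (Real.continuous_exp.tendsto 0).comp hL2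
    simpa [Function.comp_def] using this
  have hG : Tendsto (fun T : ℝ => Real.exp (-x) * Real.exp (-((x - Real.log T - K) ^ 2 / (4 * T)))
      * (((1 + (x - Real.log T - K) / (2 * T))⁻¹) ^ 2)) atTop (𝓝 (Real.exp (-x))) := by
    have := ((tendsto_const_nhds (x := Real.exp (-x))).mul hexp).mul ((hq.inv₀ one_ne_zero).pow 2)
    simpa using this
  apply hG.congr'
  have h2 : ∀ᶠ T : ℝ in atTop, ‖(x - Real.log T - K) / T‖ < 1 :=
    NormedAddCommGroup.tendsto_nhds_zero.mp (L1 x K) 1 one_pos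
  filter_upwards [eventually_ge_atTop (1:ℝ), h2] with T hT habs
  have hT0 : (0:ℝ) < T := by linarith
  set c := x - Real.log T - K with hc
  have hcgt : -T < c := by
    rw [Real.norm_eq_abs] at habs
    have h1 := (abs_lt.mp habs).1
    have := (lt_div_iff₀ hT0).mp h1
    linarith
  have h2Tc : (0:ℝ) < 2 * T + c := by linarith
  have hsa : Real.sqrt a ≠ 0 := by positivity
  have hs2T : (0:ℝ) ≤ 2 * T := by linarith
  have stepU : ((2 * T + c) / (Real.sqrt a * Real.sqrt (2 * T))) ^ 2
      = (2 * T + c) ^ 2 / (a * (2 * T)) := by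
    rw [div_pow, mul_pow, Real.sq_sqrt ha.le, Real.sq_sqrt hs2T]
  have harg : T + -(a * ((2 * T + c) ^ 2 / (a * (2 * T)))) / 2
      = (-x + (Real.log T + K)) + -(c ^ 2 / (4 * T)) := by
    rw [hc]
    field_simp
    ring
  have stepExp : Real.exp T * Real.exp (-(a * ((2 * T + c) ^ 2 / (a * (2 * T)))) / 2)
      = Real.exp (-x) * (T * (2 * π * m)) * Real.exp (-(c ^ 2 / (4 * T))) := by
    rw [← Real.exp_add, harg, Real.exp_add, Real.exp_add, Real.exp_add,
      Real.exp_log hT0, hK_def, Real.exp_log h2πm]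
  have hTne : T ≠ 0 := hT0.ne'
  have h2Tcne : (2 * T + c) ≠ 0 := h2Tc.ne'
  rw [stepU]
  calc Real.exp (-x) * Real.exp (-(c ^ 2 / (4 * T))) * ((1 + c / (2 * T))⁻¹) ^ 2
      = Real.exp (-x) * Real.exp (-(c ^ 2 / (4 * T))) * ((2 * T) / (2 * T + c)) ^ 2 := by
        congr 2
        rw [show 1 + c / (2 * T) = (2 * T + c) / (2 * T) by field_simp, inv_div]
    _ = (Real.exp (-x) * (T * (2 * π * m)) * Real.exp (-(c ^ 2 / (4 * T))))
          / (π * m * a * ((2 * T + c) ^ 2 / (a * (2 * T)))) := by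
        have hane : a ≠ 0 := ha.ne'
        have hπne : π ≠ 0 := hπ.ne'
        have hmne : m ≠ 0 := hm.ne'
        field_simp
    _ = Real.exp T * (Real.exp (-(a * ((2 * T + c) ^ 2 / (a * (2 * T)))) / 2)
          / (π * m * a * ((2 * T + c) ^ 2 / (a * (2 * T))))) := by
        rw [← stepExp]
        ring
end asym2

lemma pow_lim (p : ℕ → ℝ) (τ : ℝ) (hτ : 0 < τ)
    (h : Tendsto (fun n : ℕ => (n : ℝ) * (1 - p n)) atTop (𝓝 τ)) :
    Tendsto (fun n : ℕ => (p n) ^ n) atTop (𝓝 (Real.exp (-τ))) := by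
  set q : ℕ → ℝ := fun n => 1 - p n with hq_def
  have hinvn : Tendsto (fun n : ℕ => ((n : ℝ))⁻¹) atTop (𝓝 0) :=
    tendsto_inv_atTop_zero.comp tendsto_natCast_atTop_atTop
  have hq0 : Tendsto q atTop (𝓝 0) := by
    have := h.mul hinvn
    rw [mul_zero] at this
    apply this.congr'
    filter_upwards [eventually_ge_atTop 1] with n hn
    have hn0 : ((n:ℝ)) ≠ 0 := by positivity
    field_simp
    rfl
  have hqpos : ∀ᶠ n : ℕ in atTop, 0 < (n : ℝ) * q n := by
    have := h.eventually (p := fun y : ℝ => 0 < y) (eventually_gt_nhds hτ)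
    exact this
  have hqne : ∀ᶠ n in atTop, q n ≠ 0 := by
    filter_upwards [hqpos, eventually_ge_atTop 1] with n hp hn
    intro h0
    rw [h0, mul_zero] at hp
    exact lt_irrefl 0 hp
  have hqlt : ∀ᶠ n in atTop, q n < 1 := by
    have := NormedAddCommGroup.tendsto_nhds_zero.mp hq0 1 one_pos
    filter_upwards [this] with n hn
    rw [Real.norm_eq_abs] at hn
    linarith [(abs_lt.mp hn).2]
  -- slope of log at 1
  have hslope : Tendsto (slope Real.log 1) (𝓝[≠] 1) (𝓝 1) := by
    have hd : HasDerivAt Real.log 1 1 := by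
      simpa using Real.hasDerivAt_log one_ne_zero
    exact hasDerivAt_iff_tendsto_slope.mp hd
  have hy : Tendsto (fun n : ℕ => 1 - q n) atTop (𝓝[≠] (1:ℝ)) := by
    rw [tendsto_nhdsWithin_iff]
    constructor
    · have := hq0.const_sub 1
      simpa using this
    · filter_upwards [hqne] with n hn
      simp only [mem_compl_iff, mem_singleton_iff]
      intro hcon
      exact hn (by linarith)
  have hw : Tendsto (fun n : ℕ => Real.log (1 - q n) / (-(q n))) atTop (𝓝 1) := by
    have := hslope.comp hy
    apply this.congr
    intro n
    simp only [Function.comp, slope_def_field, Real.log_one]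
    rw [sub_zero]
    congr 1
    ring
  have hnlog : Tendsto (fun n : ℕ => (n : ℝ) * Real.log (1 - q n)) atTop (𝓝 (-τ)) := by
    have hmul := (h.mul hw).neg
    rw [mul_one] at hmul
    apply hmul.congr'
    filter_upwards [hqne] with n hn
    field_simp
    ring
  have hfinal : Tendsto (fun n : ℕ => Real.exp ((n : ℝ) * Real.log (1 - q n))) atTop
      (𝓝 (Real.exp (-τ))) := (Real.continuous_exp.tendsto _).comp hnlog
  apply hfinal.congr'
  filter_upwards [hqlt] with n hn
  have hp0 : 0 < p n := by simp only [hq_def] at hn; linarith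
  rw [show (1 : ℝ) - q n = p n by simp [hq_def]]
  rw [show ((n:ℝ)) * Real.log (p n) = ((n:ℕ) : ℝ) * Real.log (p n) by norm_num]
  rw [Real.exp_nat_mul, Real.exp_log hp0]

set_option maxHeartbeats 1000000 in
theorem skew_normal_max_gumbel_neg (l : ℝ) (hl : l < 0) (x : ℝ) :
    Tendsto (fun n : ℕ =>
      (snCdf l ((Real.sqrt (1 + l ^ 2))⁻¹ * (Real.sqrt (2 * Real.log n))⁻¹ * x +
        (Real.sqrt (2 * Real.log n / (1 + l ^ 2)) -
          (Real.log (Real.log n) + Real.log (-2 * Real.pi * l)) /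
            (Real.sqrt (1 + l ^ 2) * Real.sqrt (2 * Real.log n))))) ^ n) atTop
      (𝓝 (gumbel x)) := by
  set m : ℝ := -l with hm_def
  have hm : 0 < m := by simp [hm_def]; linarith
  have hlm : l = -m := by rw [hm_def]; ring
  have hl2 : l ^ 2 = m ^ 2 := by rw [hlm]; ring
  have ha : (0:ℝ) < 1 + m ^ 2 := by positivity
  have hπ : (0:ℝ) < π := pi_pos
  set u : ℕ → ℝ := fun n => (Real.sqrt (1 + l ^ 2))⁻¹ * (Real.sqrt (2 * Real.log n))⁻¹ * x +
        (Real.sqrt (2 * Real.log n / (1 + l ^ 2)) -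
          (Real.log (Real.log n) + Real.log (-2 * Real.pi * l)) /
            (Real.sqrt (1 + l ^ 2) * Real.sqrt (2 * Real.log n))) with hu_def
  set U : ℝ → ℝ := fun T => (2 * T + (x - Real.log T - Real.log (2 * π * m))) /
      (Real.sqrt (1 + m ^ 2) * Real.sqrt (2 * T)) with hU_def
  set B : ℝ → ℝ := fun v => Real.exp (-((1 + m ^ 2) * v ^ 2) / 2) /
      (π * m * (1 + m ^ 2) * v ^ 2) with hB_def
  have hlog : Tendsto (fun n : ℕ => Real.log n) atTop atTop :=
    Real.tendsto_log_atTop.comp tendsto_natCast_atTop_atTop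
  -- eventual identification of u with U ∘ log
  have heq_u : ∀ᶠ n : ℕ in atTop, u n = U (Real.log n) := by
    filter_upwards [eventually_ge_atTop 3] with n hn
    have hn3 : (3:ℝ) ≤ (n:ℝ) := by exact_mod_cast hn
    have hn0 : (0:ℝ) < (n:ℝ) := by linarith
    have hT1 : 1 ≤ Real.log n := by
      rw [Real.le_log_iff_exp_le hn0]
      have := Real.exp_one_lt_d9
      linarith
    have hT0 : (0:ℝ) < Real.log n := by linarith
    set T : ℝ := Real.log n
    have h2T : (0:ℝ) < 2 * T := by linarith
    have hs : (0:ℝ) < Real.sqrt (2 * T) := Real.sqrt_pos.2 h2T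
    have hsa : (0:ℝ) < Real.sqrt (1 + m ^ 2) := Real.sqrt_pos.2 ha
    have hss : Real.sqrt (2 * T) * Real.sqrt (2 * T) = 2 * T := Real.mul_self_sqrt h2T.le
    have hdiv : Real.sqrt (2 * T / (1 + m ^ 2))
        = Real.sqrt (2 * T) / Real.sqrt (1 + m ^ 2) := Real.sqrt_div h2T.le _
    have harg : -2 * π * l = 2 * π * m := by rw [hlm]; ring
    simp only [hu_def, hU_def]
    simp only [show Real.log (n:ℝ) = T from rfl]
    simp only [hl2, harg, hdiv]
    have hkey : Real.sqrt (2 * T) / Real.sqrt (1 + m ^ 2)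
        = 2 * T / (Real.sqrt (1 + m ^ 2) * Real.sqrt (2 * T)) := by
      rw [div_eq_div_iff hsa.ne' (by positivity : Real.sqrt (1 + m ^ 2) * Real.sqrt (2 * T) ≠ 0)]
      linear_combination Real.sqrt (1 + m ^ 2) * hss
    rw [hkey]
    ring
  -- u tends to infinity
  have hUtop : Tendsto (fun n : ℕ => U (Real.log n)) atTop atTop :=
    (L3 x (1 + m ^ 2) (Real.log (2 * π * m)) ha).comp hlog
  have hutop : Tendsto u atTop atTop :=
    hUtop.congr' (heq_u.mono fun n h => h.symm)
  -- n * B (u n) → exp (-x)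
  have hE : Tendsto (fun n : ℕ => (n : ℝ) * B (u n)) atTop (𝓝 (Real.exp (-x))) := by
    have hcomp := (L4 x m hm).comp hlog
    apply hcomp.congr'
    filter_upwards [heq_u, eventually_ge_atTop 1] with n hn h1
    have hn0 : (0:ℝ) < (n:ℝ) := by exact_mod_cast Nat.lt_of_lt_of_le Nat.zero_lt_one h1
    simp only [Function.comp]
    rw [Real.exp_log hn0, hn]
  -- the correction factor tends to 1
  have husq : Tendsto (fun n : ℕ => (u n) ^ 2) atTop atTop :=
    (tendsto_pow_atTop (two_ne_zero)).comp hutop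
  have hc1 : Tendsto (fun n : ℕ => (1 - 1 / (m ^ 2 * (u n) ^ 2)) /
      (1 + 2 / ((1 + m ^ 2) * (u n) ^ 2))) atTop (𝓝 1) := by
    have h1 : Tendsto (fun n : ℕ => 1 / (m ^ 2 * (u n) ^ 2)) atTop (𝓝 0) := by
      simp only [one_div]
      exact tendsto_inv_atTop_zero.comp (husq.const_mul_atTop (by positivity))
    have h2 : Tendsto (fun n : ℕ => 2 / ((1 + m ^ 2) * (u n) ^ 2)) atTop (𝓝 0) := by
      have := tendsto_inv_atTop_zero.comp (husq.const_mul_atTop ha)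
      have h2' := this.const_mul (2:ℝ)
      rw [mul_zero] at h2'
      apply h2'.congr
      intro n
      simp [Function.comp, div_eq_mul_inv]
    have := ((tendsto_const_nhds (x := (1:ℝ))).sub h1).div
      ((tendsto_const_nhds (x := (1:ℝ))).add h2) (by norm_num)
    simpa [Pi.div_def] using this
  -- squeeze
  have hup : ∀ᶠ n : ℕ in atTop, (n : ℝ) * (1 - snCdf l (u n)) ≤ (n : ℝ) * B (u n) := by
    filter_upwards [hutop.eventually_ge_atTop 2] with n hn2
    have hu0 : 0 < u n := lt_of_lt_of_le (by norm_num) hn2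
    have htail : 1 - snCdf l (u n) = ∫ t in Ioi (u n), snPdf l t := by
      rw [snCdf_eq_one_sub_tail]; ring
    rw [htail, hlm]
    exact mul_le_mul_of_nonneg_left (tail_upper m (u n) hm hu0) (Nat.cast_nonneg n)
  have hlow : ∀ᶠ n : ℕ in atTop,
      ((1 - 1 / (m ^ 2 * (u n) ^ 2)) / (1 + 2 / ((1 + m ^ 2) * (u n) ^ 2))) * ((n : ℝ) * B (u n))
        ≤ (n : ℝ) * (1 - snCdf l (u n)) := by
    filter_upwards [hutop.eventually_ge_atTop 2, hutop.eventually_ge_atTop (2 / m)] with n hn2 hnm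
    have htail : 1 - snCdf l (u n) = ∫ t in Ioi (u n), snPdf l t := by
      rw [snCdf_eq_one_sub_tail]; ring
    rw [htail, hlm]
    have := mul_le_mul_of_nonneg_left (tail_lower m (u n) hm hn2 hnm) (Nat.cast_nonneg n)
    calc ((1 - 1 / (m ^ 2 * (u n) ^ 2)) / (1 + 2 / ((1 + m ^ 2) * (u n) ^ 2))) * ((n : ℝ) * B (u n))
        = (n : ℝ) * (((1 - 1 / (m ^ 2 * (u n) ^ 2)) / (1 + 2 / ((1 + m ^ 2) * (u n) ^ 2))) * B (u n)) := by
          ring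
      _ ≤ (n : ℝ) * ∫ t in Ioi (u n), snPdf (-m) t := this
  have hlowlim : Tendsto (fun n : ℕ =>
      ((1 - 1 / (m ^ 2 * (u n) ^ 2)) / (1 + 2 / ((1 + m ^ 2) * (u n) ^ 2))) * ((n : ℝ) * B (u n)))
      atTop (𝓝 (Real.exp (-x))) := by
    have := hc1.mul hE
    simpa using this
  have hmain : Tendsto (fun n : ℕ => (n : ℝ) * (1 - snCdf l (u n))) atTop (𝓝 (Real.exp (-x))) :=
    tendsto_of_tendsto_of_tendsto_of_le_of_le' hlowlim hE hlow hup
  have := pow_lim (fun n => snCdf l (u n)) (Real.exp (-x)) (Real.exp_pos _) hmain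
  unfold gumbel
  exact this
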